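/- arXiv:2305.11607 — 4 statements merged into one kernel-verified Lean document; each statement's English description precedes it below -/
import Mathlib

section
/- The theta graph θ_{2,2,2} (equivalently K_{2,3}) is 2-choosable: for every assignment of lists of size 2 to the vertices of K_{2,3}, there exists a proper coloring choosing each vertex's color from its list. -/
/-- A graph `G` is `L`-colorable: there is a proper coloring choosing each
vertex's color from its list. -/
def ListColorable {V : Type*} (G : SimpleGraph V) (L : V → Finset ℕ) : Prop :=
  ∃ f : V → ℕ, (∀ v, f v ∈ L v) ∧ ∀ ⦃u v⦄, G.Adj u v → f u ≠ f v

/-- A graph is `k`-choosable if it is `L`-colorable for every list assignment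
with all lists of size `k`. -/
def Choosable {V : Type*} (G : SimpleGraph V) (k : ℕ) : Prop :=
  ∀ L : V → Finset ℕ, (∀ v, (L v).card = k) → ListColorable G L

lemma aux_exists_ne (s : Finset ℕ) (h : s.card = 2) (a : ℕ) : ∃ x ∈ s, x ≠ a :=
  Finset.exists_mem_ne (by omega) a

lemma aux_pair_mem {x y x' y' : ℕ} (h : ({x, y} : Finset ℕ) = {x', y'}) :
    x = x' ∨ x = y' := by
  have : x ∈ ({x', y'} : Finset ℕ) := h ▸ (by simp)
  simpa using this

lemma aux_pair_mem' {x y x' y' : ℕ} (h : ({x, y} : Finset ℕ) = {x', y'}) :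
    y = x' ∨ y = y' := by
  have : y ∈ ({x', y'} : Finset ℕ) := h ▸ (by simp)
  simpa using this

lemma aux_exists_ne_ne (s : Finset ℕ) (h : s.card = 2) (a b : ℕ)
    (hs : s ≠ ({a, b} : Finset ℕ)) : ∃ x ∈ s, x ≠ a ∧ x ≠ b := by
  obtain ⟨x, y, hxy, rfl⟩ := Finset.card_eq_two.mp h
  by_cases hx : x ≠ a ∧ x ≠ b
  · exact ⟨x, by simp, hx⟩
  by_cases hy : y ≠ a ∧ y ≠ b
  · exact ⟨y, by simp, hy⟩
  rw [not_and_or, not_ne_iff, not_ne_iff] at hx hy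
  exfalso; apply hs
  rcases hx with rfl | rfl <;> rcases hy with rfl | rfl
  · exact absurd rfl hxy
  · rfl
  · exact (Finset.pair_comm y x).symm
  · exact absurd rfl hxy

theorem K23_two_choosable :
    Choosable (completeBipartiteGraph (Fin 2) (Fin 3)) 2 := by
  intro L hL
  -- key step: find a ∈ L (inl 0), b ∈ L (inl 1) such that no right list equals {a, b}
  have key : ∃ a ∈ L (Sum.inl 0), ∃ b ∈ L (Sum.inl 1),
      ∀ j : Fin 3, L (Sum.inr j) ≠ {a, b} := by
    by_cases hcom : ∃ c, c ∈ L (Sum.inl 0) ∧ c ∈ L (Sum.inl 1)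
    · obtain ⟨c, hc0, hc1⟩ := hcom
      refine ⟨c, hc0, c, hc1, fun j hj => ?_⟩
      have : (L (Sum.inr j)).card = 2 := hL _
      rw [hj] at this
      simp at this
    · push_neg at hcom
      obtain ⟨a1, a2, ha12, hA⟩ := Finset.card_eq_two.mp (hL (Sum.inl 0))
      obtain ⟨b1, b2, hb12, hB⟩ := Finset.card_eq_two.mp (hL (Sum.inl 1))
      have ma1 : a1 ∈ L (Sum.inl 0) := by rw [hA]; simp
      have ma2 : a2 ∈ L (Sum.inl 0) := by rw [hA]; simp
      have mb1 : b1 ∈ L (Sum.inl 1) := by rw [hB]; simp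
      have mb2 : b2 ∈ L (Sum.inl 1) := by rw [hB]; simp
      have d11 : a1 ≠ b1 := fun h => hcom a1 ma1 (h ▸ mb1)
      have d12 : a1 ≠ b2 := fun h => hcom a1 ma1 (h ▸ mb2)
      have d21 : a2 ≠ b1 := fun h => hcom a2 ma2 (h ▸ mb1)
      have d22 : a2 ≠ b2 := fun h => hcom a2 ma2 (h ▸ mb2)
      by_contra hbad
      push_neg at hbad
      obtain ⟨j11, h11⟩ := hbad a1 ma1 b1 mb1
      obtain ⟨j12, h12⟩ := hbad a1 ma1 b2 mb2
      obtain ⟨j21, h21⟩ := hbad a2 ma2 b1 mb1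
      obtain ⟨j22, h22⟩ := hbad a2 ma2 b2 mb2
      have e1 : j11 ≠ j12 := by
        intro h; rw [h, h12] at h11
        have p1 := aux_pair_mem h11; have p2 := aux_pair_mem' h11; omega
      have e2 : j11 ≠ j21 := by
        intro h; rw [h, h21] at h11
        have p1 := aux_pair_mem h11; have p2 := aux_pair_mem' h11; omega
      have e3 : j11 ≠ j22 := by
        intro h; rw [h, h22] at h11
        have p1 := aux_pair_mem h11; have p2 := aux_pair_mem' h11; omega
      have e4 : j12 ≠ j21 := by
        intro h; rw [h, h21] at h12
        have p1 := aux_pair_mem h12; have p2 := aux_pair_mem' h12; omega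
      have e5 : j12 ≠ j22 := by
        intro h; rw [h, h22] at h12
        have p1 := aux_pair_mem h12; have p2 := aux_pair_mem' h12; omega
      have e6 : j21 ≠ j22 := by
        intro h; rw [h, h22] at h21
        have p1 := aux_pair_mem h21; have p2 := aux_pair_mem' h21; omega
      have v1 := j11.isLt; have v2 := j12.isLt; have v3 := j21.isLt; have v4 := j22.isLt
      have n1 : j11.val ≠ j12.val := fun h => e1 (Fin.ext h)
      have n2 : j11.val ≠ j21.val := fun h => e2 (Fin.ext h)
      have n3 : j11.val ≠ j22.val := fun h => e3 (Fin.ext h)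
      have n4 : j12.val ≠ j21.val := fun h => e4 (Fin.ext h)
      have n5 : j12.val ≠ j22.val := fun h => e5 (Fin.ext h)
      have n6 : j21.val ≠ j22.val := fun h => e6 (Fin.ext h)
      omega
  obtain ⟨a, ha, b, hb, hgood⟩ := key
  choose g hg hgne using fun j : Fin 3 =>
    aux_exists_ne_ne (L (Sum.inr j)) (hL _) a b (hgood j)
  refine ⟨Sum.elim (fun i => if i = 0 then a else b) g, ?_, ?_⟩
  · rintro (i | j)
    · fin_cases i <;> simp [ha, hb]
    · exact hg j
  · rintro (i | i) (j | j) hadj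
    · simp at hadj
    · simp only [Sum.elim_inl, Sum.elim_inr]
      by_cases h : i = 0
      · simp only [h, if_pos rfl]; exact ((hgne j).1).symm
      · rw [if_neg h]; exact ((hgne j).2).symm
    · simp only [Sum.elim_inl, Sum.elim_inr]
      by_cases h : j = 0
      · simp only [h, if_pos rfl]; exact (hgne i).1
      · rw [if_neg h]; exact (hgne i).2
    · simp at hadj
end

section
/- The theta graph θ_{3,3,3} is not 2-choosable: there exists an assignment of lists of size 2 to the vertices of θ_{3,3,3} admitting no proper coloring from the lists. -/
/-- The theta graph `θ₃,₃,₃`: vertices `0` and `1` joined by the three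
internally disjoint paths `0-2-3-1`, `0-4-5-1`, `0-6-7-1`. -/
def theta333 : SimpleGraph (Fin 8) :=
  SimpleGraph.fromRel (fun i j =>
    ((i : ℕ) = 0 ∧ (j : ℕ) = 2) ∨ ((i : ℕ) = 2 ∧ (j : ℕ) = 3) ∨
    ((i : ℕ) = 3 ∧ (j : ℕ) = 1) ∨ ((i : ℕ) = 0 ∧ (j : ℕ) = 4) ∨
    ((i : ℕ) = 4 ∧ (j : ℕ) = 5) ∨ ((i : ℕ) = 5 ∧ (j : ℕ) = 1) ∨
    ((i : ℕ) = 0 ∧ (j : ℕ) = 6) ∨ ((i : ℕ) = 6 ∧ (j : ℕ) = 7) ∨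
    ((i : ℕ) = 7 ∧ (j : ℕ) = 1))

theorem theta333_not_two_choosable :
    ∃ L : Fin 8 → Finset ℕ, (∀ v, (L v).card = 2) ∧
      ¬ ListColorable theta333 L := by
  refine ⟨![{0,3},{0,3},{2,3},{0,2},{0,2},{2,3},{0,3},{0,3}], by decide, ?_⟩
  rintro ⟨f, hmem, hadj⟩
  have n02 := hadj (show theta333.Adj 0 2 by simp only [theta333, SimpleGraph.fromRel_adj]; decide)
  have n23 := hadj (show theta333.Adj 2 3 by simp only [theta333, SimpleGraph.fromRel_adj]; decide)
  have n31 := hadj (show theta333.Adj 3 1 by simp only [theta333, SimpleGraph.fromRel_adj]; decide)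
  have n04 := hadj (show theta333.Adj 0 4 by simp only [theta333, SimpleGraph.fromRel_adj]; decide)
  have n45 := hadj (show theta333.Adj 4 5 by simp only [theta333, SimpleGraph.fromRel_adj]; decide)
  have n51 := hadj (show theta333.Adj 5 1 by simp only [theta333, SimpleGraph.fromRel_adj]; decide)
  have n06 := hadj (show theta333.Adj 0 6 by simp only [theta333, SimpleGraph.fromRel_adj]; decide)
  have n67 := hadj (show theta333.Adj 6 7 by simp only [theta333, SimpleGraph.fromRel_adj]; decide)
  have n71 := hadj (show theta333.Adj 7 1 by simp only [theta333, SimpleGraph.fromRel_adj]; decide)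
  have h0 : f 0 ∈ ({0,3} : Finset ℕ) := hmem 0
  rw [Finset.mem_insert, Finset.mem_singleton] at h0
  have h1 : f 1 ∈ ({0,3} : Finset ℕ) := hmem 1
  rw [Finset.mem_insert, Finset.mem_singleton] at h1
  have h2 : f 2 ∈ ({2,3} : Finset ℕ) := hmem 2
  rw [Finset.mem_insert, Finset.mem_singleton] at h2
  have h3 : f 3 ∈ ({0,2} : Finset ℕ) := hmem 3
  rw [Finset.mem_insert, Finset.mem_singleton] at h3
  have h4 : f 4 ∈ ({0,2} : Finset ℕ) := hmem 4
  rw [Finset.mem_insert, Finset.mem_singleton] at h4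
  have h5 : f 5 ∈ ({2,3} : Finset ℕ) := hmem 5
  rw [Finset.mem_insert, Finset.mem_singleton] at h5
  have h6 : f 6 ∈ ({0,3} : Finset ℕ) := hmem 6
  rw [Finset.mem_insert, Finset.mem_singleton] at h6
  have h7 : f 7 ∈ ({0,3} : Finset ℕ) := hmem 7
  rw [Finset.mem_insert, Finset.mem_singleton] at h7
  rcases h0 with h0|h0 <;> rcases h1 with h1|h1 <;> rcases h2 with h2|h2 <;>
    rcases h3 with h3|h3 <;> rcases h4 with h4|h4 <;> rcases h5 with h5|h5 <;>
    rcases h6 with h6|h6 <;> rcases h7 with h7|h7 <;> omega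
end

section
/- The theta graph θ_{2,2,2m} is 2-choosable for every m ≥ 1: for any assignment of lists of size 2 to its vertices, there exists a proper coloring from the lists. -/
/-- The theta graph `θ₂,₂,₂ₘ`: vertices `0` and `1` joined by the internally
disjoint paths `0-2-1`, `0-3-1`, and `0-4-5-⋯-(2m+2)-1` of length `2m`. -/
def theta22 (m : ℕ) : SimpleGraph (Fin (2 * m + 3)) :=
  SimpleGraph.fromRel (fun i j =>
    ((i : ℕ) = 0 ∧ (j : ℕ) = 2) ∨ ((i : ℕ) = 2 ∧ (j : ℕ) = 1) ∨
    ((i : ℕ) = 0 ∧ (j : ℕ) = 3) ∨ ((i : ℕ) = 3 ∧ (j : ℕ) = 1) ∨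
    ((i : ℕ) = 0 ∧ (j : ℕ) = 4) ∨
    (4 ≤ (i : ℕ) ∧ (j : ℕ) = (i : ℕ) + 1) ∨
    ((i : ℕ) = 2 * m + 2 ∧ (j : ℕ) = 1))

namespace Theta22Aux

variable (M : ℕ → Finset ℕ)

def ach (c : ℕ) : ℕ → Finset ℕ
  | 0 => {c}
  | i+1 => (M (i+1)).filter (fun x => ∃ e ∈ ach c i, e ≠ x)

variable {M}

lemma ach_succ (c i : ℕ) :
    ach M c (i+1) = (M (i+1)).filter (fun x => ∃ e ∈ ach M c i, e ≠ x) := rfl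

lemma ach_subset_all {c : ℕ} (hc : c ∈ M 0) : ∀ i, ach M c i ⊆ M i
  | 0 => by intro x hx; rw [show ach M c 0 = {c} from rfl, Finset.mem_singleton] at hx
            subst hx; exact hc
  | (i+1) => Finset.filter_subset _ _

lemma ach_nonempty (hM : ∀ i, (M i).card = 2) (c : ℕ) : ∀ i, (ach M c i).Nonempty
  | 0 => ⟨c, Finset.mem_singleton_self c⟩
  | (i+1) => by
      obtain ⟨e, he⟩ := ach_nonempty hM c i
      obtain ⟨a, ha, b, hb, hab⟩ := Finset.one_lt_card.mp (by rw [hM (i+1)]; norm_num)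
      rcases eq_or_ne e a with h | h
      · exact ⟨b, Finset.mem_filter.mpr ⟨hb, e, he, h ▸ hab⟩⟩
      · exact ⟨a, Finset.mem_filter.mpr ⟨ha, e, he, h⟩⟩

lemma ach_full (hM : ∀ i, (M i).card = 2) (c i : ℕ) (h2 : 2 ≤ (ach M c i).card) :
    ach M c (i+1) = M (i+1) := by
  rw [ach_succ]
  apply Finset.filter_true_of_mem
  intro x _
  obtain ⟨a, ha, b, hb, hab⟩ := Finset.one_lt_card.mp
    (show 1 < (ach M c i).card by omega)
  rcases eq_or_ne a x with h | h
  · exact ⟨b, hb, fun hbx => hab (h.trans hbx.symm)⟩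
  · exact ⟨a, ha, h⟩

lemma ach_two_mono (hM : ∀ i, (M i).card = 2) (c i k : ℕ) (hik : i ≤ k)
    (h2 : 2 ≤ (ach M c i).card) : 2 ≤ (ach M c k).card := by
  induction k, hik using Nat.le_induction with
  | base => exact h2
  | succ k hk ih => rw [ach_full hM c k ih, hM]

lemma ach_colorable (hM : ∀ i, (M i).card = 2) {c : ℕ} (hc : c ∈ M 0) :
    ∀ n d, d ∈ ach M c n →
      ∃ g : ℕ → ℕ, g 0 = c ∧ g n = d ∧ (∀ j, j ≤ n → g j ∈ M j) ∧
        (∀ j, j < n → g j ≠ g (j+1))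
  | 0, d, hd => by
      rw [show ach M c 0 = {c} from rfl, Finset.mem_singleton] at hd
      subst hd
      exact ⟨fun _ => d, rfl, rfl,
        fun j hj => by rw [Nat.le_zero.mp hj]; exact hc,
        fun j hj => absurd hj (by omega)⟩
  | (n+1), d, hd => by
      rw [ach_succ, Finset.mem_filter] at hd
      obtain ⟨hdM, e, he, hed⟩ := hd
      obtain ⟨g, hg0, hgn, hmem, hstep⟩ := ach_colorable hM hc n e he
      refine ⟨fun j => if j ≤ n then g j else d, ?_, ?_, ?_, ?_⟩
      · show (if 0 ≤ n then g 0 else d) = c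
        rw [if_pos (Nat.zero_le n)]; exact hg0
      · show (if n + 1 ≤ n then g (n+1) else d) = d
        rw [if_neg (by omega)]
      · intro j hj
        show (if j ≤ n then g j else d) ∈ M j
        by_cases h : j ≤ n
        · rw [if_pos h]; exact hmem j h
        · have : j = n + 1 := by omega
          subst this; rw [if_neg (by omega)]; exact hdM
      · intro j hj
        show (if j ≤ n then g j else d) ≠ (if j + 1 ≤ n then g (j+1) else d)
        by_cases h : j < n
        · rw [if_pos (show j ≤ n by omega), if_pos (show j + 1 ≤ n by omega)]
          exact hstep j h
        · have : j = n := by omega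
          subst this
          rw [if_pos le_rfl, if_neg (by omega), hgn]
          exact hed

lemma caseI (hM : ∀ i, (M i).card = 2) {α β : ℕ} (hne : α ≠ β) {n : ℕ}
    (hα1 : ∀ i ≤ n, (ach M α i).card ≤ 1) (hβ1 : ∀ i ≤ n, (ach M β i).card ≤ 1) :
    ∀ i ≤ n, ach M α i = {(if Even i then α else β)} ∧
             ach M β i = {(if Even i then β else α)} := by
  intro i
  induction i with
  | zero => intro _; constructor <;> simp [ach]
  | succ i ih =>
    intro hi
    obtain ⟨hA, hB⟩ := ih (by omega)
    have core : ∀ x y : ℕ, x ≠ y → ach M α i = {x} → ach M β i = {y} →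
        ach M α (i+1) = {y} ∧ ach M β (i+1) = {x} := by
      intro x y hxy hAx hBy
      have hAs : ach M α (i+1) = (M (i+1)).filter (fun dd => x ≠ dd) := by
        rw [ach_succ, hAx]; ext dd; simp
      have hBs : ach M β (i+1) = (M (i+1)).filter (fun dd => y ≠ dd) := by
        rw [ach_succ, hBy]; ext dd; simp
      have hxm : x ∈ M (i+1) := by
        by_contra hxm
        have heq : (M (i+1)).filter (fun dd => x ≠ dd) = M (i+1) :=
          Finset.filter_true_of_mem (fun dd hdd h => hxm (h ▸ hdd))
        have hcard := hα1 (i+1) hi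
        rw [hAs, heq, hM] at hcard; omega
      have hym : y ∈ M (i+1) := by
        by_contra hym
        have heq : (M (i+1)).filter (fun dd => y ≠ dd) = M (i+1) :=
          Finset.filter_true_of_mem (fun dd hdd h => hym (h ▸ hdd))
        have hcard := hβ1 (i+1) hi
        rw [hBs, heq, hM] at hcard; omega
      have hMeq : ({x, y} : Finset ℕ) = M (i+1) := by
        apply Finset.eq_of_subset_of_card_le
        · intro s hs; simp only [Finset.mem_insert, Finset.mem_singleton] at hs
          rcases hs with rfl | rfl
          · exact hxm
          · exact hym
        · rw [hM, Finset.card_pair hxy]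
      constructor
      · rw [hAs, ← hMeq]; ext dd
        simp only [Finset.mem_filter, Finset.mem_insert, Finset.mem_singleton]
        constructor
        · rintro ⟨rfl | rfl, h⟩
          · exact absurd rfl h
          · rfl
        · rintro rfl; exact ⟨Or.inr rfl, hxy⟩
      · rw [hBs, ← hMeq]; ext dd
        simp only [Finset.mem_filter, Finset.mem_insert, Finset.mem_singleton]
        constructor
        · rintro ⟨rfl | rfl, h⟩
          · rfl
          · exact absurd rfl h
        · rintro rfl; exact ⟨Or.inl rfl, fun h => hxy h.symm⟩
    by_cases hev : Even i
    · rw [if_pos hev] at hA hB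
      have hcore := core α β hne hA hB
      have hodd : ¬ Even (i+1) := by simp [Nat.even_add_one, hev]
      rw [if_neg hodd, if_neg hodd]
      exact hcore
    · rw [if_neg hev] at hA hB
      have hcore := core β α hne.symm hA hB
      have heven : Even (i+1) := by simp [Nat.even_add_one, hev]
      rw [if_pos heven, if_pos heven]
      exact hcore

lemma pair_structure {α d : ℕ} {S : Finset ℕ} (hS : S.card = 2)
    (h : ∀ s ∈ S, s = α ∨ s = d) : α ∈ S ∧ d ∈ S ∧ α ≠ d := by
  have hsub : S ⊆ {α, d} := by
    intro s hs
    rcases h s hs with rfl | rfl <;> simp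
  have hc2 : ({α, d} : Finset ℕ).card ≤ S.card := by
    have := Finset.card_insert_le α ({d} : Finset ℕ)
    simp only [Finset.card_singleton] at this
    omega
  have heq : S = {α, d} := Finset.eq_of_subset_of_card_le hsub hc2
  have hαd : α ≠ d := by
    rintro rfl
    rw [heq, Finset.insert_eq_self.mpr (Finset.mem_singleton_self α),
      Finset.card_singleton] at hS
    omega
  rw [heq]
  exact ⟨by simp, by simp, hαd⟩

lemma mainFull (hM : ∀ i, (M i).card = 2) (n : ℕ) {α β : ℕ}
    (hαm : α ∈ M 0) (hβm : β ∈ M 0) (hne : α ≠ β)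
    (hfull : 2 ≤ (ach M α n).card)
    (X Y : Finset ℕ) (hX : X.card = 2) (hY : Y.card = 2) :
    ∃ c d xa yb, ∃ g : ℕ → ℕ, c ∈ M 0 ∧ g 0 = c ∧ g n = d ∧
      (∀ j, j ≤ n → g j ∈ M j) ∧ (∀ j, j < n → g j ≠ g (j+1)) ∧
      xa ∈ X ∧ xa ≠ c ∧ xa ≠ d ∧ yb ∈ Y ∧ yb ≠ c ∧ yb ≠ d := by
  have hAsub := ach_subset_all hαm n
  have hAeq : ach M α n = M n :=
    Finset.eq_of_subset_of_card_le hAsub (by rw [hM n]; exact hfull)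
  obtain ⟨d1, hd1, d2, hd2, hd12⟩ := Finset.one_lt_card.mp
    (show 1 < (ach M α n).card by omega)
  have finishd : ∀ d, d ∈ ach M α n → (∃ xa ∈ X, xa ≠ α ∧ xa ≠ d) →
      (∃ yb ∈ Y, yb ≠ α ∧ yb ≠ d) →
      ∃ c d' xa yb, ∃ g : ℕ → ℕ, c ∈ M 0 ∧ g 0 = c ∧ g n = d' ∧
        (∀ j, j ≤ n → g j ∈ M j) ∧ (∀ j, j < n → g j ≠ g (j+1)) ∧
        xa ∈ X ∧ xa ≠ c ∧ xa ≠ d' ∧ yb ∈ Y ∧ yb ≠ c ∧ yb ≠ d' := by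
    rintro d hd ⟨xa, hxaX, hxa1, hxa2⟩ ⟨yb, hybY, hyb1, hyb2⟩
    obtain ⟨g, hg0, hgn, hmem, hstep⟩ := ach_colorable hM hαm n d hd
    exact ⟨α, d, xa, yb, g, hαm, hg0, hgn, hmem, hstep,
      hxaX, hxa1, hxa2, hybY, hyb1, hyb2⟩
  by_cases hgood1 : (∃ xa ∈ X, xa ≠ α ∧ xa ≠ d1) ∧ (∃ yb ∈ Y, yb ≠ α ∧ yb ≠ d1)
  · exact finishd d1 hd1 hgood1.1 hgood1.2
  by_cases hgood2 : (∃ xa ∈ X, xa ≠ α ∧ xa ≠ d2) ∧ (∃ yb ∈ Y, yb ≠ α ∧ yb ≠ d2)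
  · exact finishd d2 hd2 hgood2.1 hgood2.2
  have hfinish : α ∈ X → α ∈ Y → α ∉ M n →
      ∃ c d' xa yb, ∃ g : ℕ → ℕ, c ∈ M 0 ∧ g 0 = c ∧ g n = d' ∧
        (∀ j, j ≤ n → g j ∈ M j) ∧ (∀ j, j < n → g j ≠ g (j+1)) ∧
        xa ∈ X ∧ xa ≠ c ∧ xa ≠ d' ∧ yb ∈ Y ∧ yb ≠ c ∧ yb ≠ d' := by
    intro hαX hαY hαM
    obtain ⟨d, hd⟩ := ach_nonempty hM β n
    have hdM : d ∈ M n := ach_subset_all hβm n hd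
    have hdα : α ≠ d := fun h => hαM (h ▸ hdM)
    obtain ⟨g, hg0, hgn, hmem, hstep⟩ := ach_colorable hM hβm n d hd
    exact ⟨β, d, α, α, g, hβm, hg0, hgn, hmem, hstep,
      hαX, hne, hdα, hαY, hne, hdα⟩
  have hbad : ∀ d, ¬((∃ xa ∈ X, xa ≠ α ∧ xa ≠ d) ∧ (∃ yb ∈ Y, yb ≠ α ∧ yb ≠ d)) →
      ((α ∈ X ∧ d ∈ X ∧ α ≠ d) ∨ (α ∈ Y ∧ d ∈ Y ∧ α ≠ d)) := by
    intro d hd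
    rw [not_and_or] at hd
    rcases hd with hd | hd
    · left
      apply pair_structure hX
      intro s hs
      by_contra hcon
      push_neg at hcon
      exact hd ⟨s, hs, hcon.1, hcon.2⟩
    · right
      apply pair_structure hY
      intro s hs
      by_contra hcon
      push_neg at hcon
      exact hd ⟨s, hs, hcon.1, hcon.2⟩
  have hd1M : d1 ∈ M n := hAsub hd1
  have hd2M : d2 ∈ M n := hAsub hd2
  rcases hbad d1 hgood1 with ⟨h1a, h1d, h1ne⟩ | ⟨h1a, h1d, h1ne⟩ <;>
    rcases hbad d2 hgood2 with ⟨h2a, h2d, h2ne⟩ | ⟨h2a, h2d, h2ne⟩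
  · -- both X : contradiction
    exfalso
    have hXeq : ({α, d1} : Finset ℕ) = X := by
      apply Finset.eq_of_subset_of_card_le
      · intro s hs; simp only [Finset.mem_insert, Finset.mem_singleton] at hs
        rcases hs with rfl | rfl
        · exact h1a
        · exact h1d
      · rw [hX, Finset.card_pair h1ne]
    rw [← hXeq] at h2d
    simp only [Finset.mem_insert, Finset.mem_singleton] at h2d
    omega
  · -- X then Y
    apply hfinish h1a h2a
    intro hαM
    have hMn : ({d1, d2} : Finset ℕ) = M n := by
      apply Finset.eq_of_subset_of_card_le
      · intro s hs; simp only [Finset.mem_insert, Finset.mem_singleton] at hs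
        rcases hs with rfl | rfl
        · exact hd1M
        · exact hd2M
      · rw [hM, Finset.card_pair hd12]
    rw [← hMn] at hαM
    simp only [Finset.mem_insert, Finset.mem_singleton] at hαM
    omega
  · -- Y then X
    apply hfinish h2a h1a
    intro hαM
    have hMn : ({d1, d2} : Finset ℕ) = M n := by
      apply Finset.eq_of_subset_of_card_le
      · intro s hs; simp only [Finset.mem_insert, Finset.mem_singleton] at hs
        rcases hs with rfl | rfl
        · exact hd1M
        · exact hd2M
      · rw [hM, Finset.card_pair hd12]
    rw [← hMn] at hαM
    simp only [Finset.mem_insert, Finset.mem_singleton] at hαM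
    omega
  · -- both Y : contradiction
    exfalso
    have hYeq : ({α, d1} : Finset ℕ) = Y := by
      apply Finset.eq_of_subset_of_card_le
      · intro s hs; simp only [Finset.mem_insert, Finset.mem_singleton] at hs
        rcases hs with rfl | rfl
        · exact h1a
        · exact h1d
      · rw [hY, Finset.card_pair h1ne]
    rw [← hYeq] at h2d
    simp only [Finset.mem_insert, Finset.mem_singleton] at h2d
    omega

lemma mainLemma (hM : ∀ i, (M i).card = 2) (n : ℕ) (hn : Even n)
    (X Y : Finset ℕ) (hX : X.card = 2) (hY : Y.card = 2) :
    ∃ c d xa yb, ∃ g : ℕ → ℕ, c ∈ M 0 ∧ g 0 = c ∧ g n = d ∧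
      (∀ j, j ≤ n → g j ∈ M j) ∧ (∀ j, j < n → g j ≠ g (j+1)) ∧
      xa ∈ X ∧ xa ≠ c ∧ xa ≠ d ∧ yb ∈ Y ∧ yb ≠ c ∧ yb ≠ d := by
  obtain ⟨α, hαm, β, hβm, hne⟩ := Finset.one_lt_card.mp (by rw [hM 0]; norm_num)
  by_cases hfa : 2 ≤ (ach M α n).card
  · exact mainFull hM n hαm hβm hne hfa X Y hX hY
  by_cases hfb : 2 ≤ (ach M β n).card
  · exact mainFull hM n hβm hαm hne.symm hfb X Y hX hY
  have hα1 : ∀ i ≤ n, (ach M α i).card ≤ 1 := by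
    intro i hi
    by_contra h
    exact hfa (ach_two_mono hM α i n hi (by omega))
  have hβ1 : ∀ i ≤ n, (ach M β i).card ≤ 1 := by
    intro i hi
    by_contra h
    exact hfb (ach_two_mono hM β i n hi (by omega))
  obtain ⟨hachα, -⟩ := caseI hM hne hα1 hβ1 n le_rfl
  rw [if_pos hn] at hachα
  obtain ⟨g, hg0, hgn, hmem, hstep⟩ :=
    ach_colorable hM hαm n α (by rw [hachα]; exact Finset.mem_singleton_self α)
  obtain ⟨x1, hx1, x2, hx2, hx12⟩ := Finset.one_lt_card.mp (by rw [hX]; norm_num)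
  obtain ⟨y1, hy1, y2, hy2, hy12⟩ := Finset.one_lt_card.mp (by rw [hY]; norm_num)
  have hxa : ∃ z ∈ X, z ≠ α := by
    rcases eq_or_ne x1 α with h | h
    · exact ⟨x2, hx2, fun hh => hx12 (h.trans hh.symm)⟩
    · exact ⟨x1, hx1, h⟩
  have hyb : ∃ z ∈ Y, z ≠ α := by
    rcases eq_or_ne y1 α with h | h
    · exact ⟨y2, hy2, fun hh => hy12 (h.trans hh.symm)⟩
    · exact ⟨y1, hy1, h⟩
  obtain ⟨xa, hxaX, hxaα⟩ := hxa
  obtain ⟨yb, hybY, hybα⟩ := hyb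
  exact ⟨α, α, xa, yb, g, hαm, hg0, hgn, hmem, hstep,
    hxaX, hxaα, hxaα, hybY, hybα, hybα⟩

end Theta22Aux

open Theta22Aux in
def Mdef (m : ℕ) (L : Fin (2*m+3) → Finset ℕ) (i : ℕ) : Finset ℕ :=
  L ⟨if i = 0 then 0 else if 2*m ≤ i then 1 else i + 3, by split_ifs <;> omega⟩

lemma Mdef_zero (m : ℕ) (L : Fin (2*m+3) → Finset ℕ) :
    Mdef m L 0 = L ⟨0, by omega⟩ := rfl

lemma Mdef_hi (m : ℕ) (L : Fin (2*m+3) → Finset ℕ) (i : ℕ) (h : 2*m ≤ i) (h0 : i ≠ 0) :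
    Mdef m L i = L ⟨1, by omega⟩ := by
  unfold Mdef
  congr 1
  apply Fin.ext
  show (if i = 0 then 0 else if 2*m ≤ i then 1 else i + 3) = 1
  rw [if_neg h0, if_pos h]

lemma Mdef_mid (m : ℕ) (L : Fin (2*m+3) → Finset ℕ) (i : ℕ) (h0 : i ≠ 0) (h : i < 2*m) :
    Mdef m L i = L ⟨i + 3, by omega⟩ := by
  unfold Mdef
  congr 1
  apply Fin.ext
  show (if i = 0 then 0 else if 2*m ≤ i then 1 else i + 3) = i + 3
  rw [if_neg h0, if_neg (by omega)]

theorem theta22_two_choosable (m : ℕ) (hm : 1 ≤ m) :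
    Choosable (theta22 m) 2 := by
  intro L hL
  have hM : ∀ i, (Mdef m L i).card = 2 := fun i => hL _
  obtain ⟨c, d, xa, yb, g, hc0, hg0, hgn, hgmem, hgstep, hxaX, hxac, hxad, hybY, hybc, hybd⟩ :=
    Theta22Aux.mainLemma hM (2*m) ⟨m, two_mul m⟩
      (L ⟨2, by omega⟩) (L ⟨3, by omega⟩) (hL _) (hL _)
  set f : Fin (2*m+3) → ℕ := fun k => if (k:ℕ) = 0 then c else if (k:ℕ) = 1 then d
    else if (k:ℕ) = 2 then xa else if (k:ℕ) = 3 then yb else g ((k:ℕ) - 3) with hfdef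
  have hf0 : ∀ a : Fin (2*m+3), (a:ℕ) = 0 → f a = c := fun a ha => by simp only [hfdef, ha, ↓reduceIte]
  have hf1 : ∀ a : Fin (2*m+3), (a:ℕ) = 1 → f a = d := fun a ha => by simp +decide only [hfdef, ha, ↓reduceIte]
  have hf2 : ∀ a : Fin (2*m+3), (a:ℕ) = 2 → f a = xa := fun a ha => by simp +decide only [hfdef, ha, ↓reduceIte]
  have hf3 : ∀ a : Fin (2*m+3), (a:ℕ) = 3 → f a = yb := fun a ha => by simp +decide only [hfdef, ha, ↓reduceIte]
  have hfg : ∀ a : Fin (2*m+3), 4 ≤ (a:ℕ) → f a = g ((a:ℕ) - 3) := fun a ha => by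
    simp only [hfdef]
    rw [if_neg (by omega), if_neg (by omega), if_neg (by omega), if_neg (by omega)]
  have hmemf : ∀ v, f v ∈ L v := by
    intro v
    by_cases h0 : (v:ℕ) = 0
    · rw [hf0 v h0, show v = ⟨0, by omega⟩ from Fin.ext h0]
      exact hc0
    by_cases h1 : (v:ℕ) = 1
    · rw [hf1 v h1, show v = ⟨1, by omega⟩ from Fin.ext h1]
      have hd : d ∈ Mdef m L (2*m) := hgn ▸ hgmem (2*m) le_rfl
      rwa [Mdef_hi m L (2*m) le_rfl (by omega)] at hd
    by_cases h2 : (v:ℕ) = 2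
    · rw [hf2 v h2, show v = ⟨2, by omega⟩ from Fin.ext h2]
      exact hxaX
    by_cases h3 : (v:ℕ) = 3
    · rw [hf3 v h3, show v = ⟨3, by omega⟩ from Fin.ext h3]
      exact hybY
    · have h4 : 4 ≤ (v:ℕ) := by omega
      have hlt := v.isLt
      rw [hfg v h4]
      have hj := hgmem ((v:ℕ) - 3) (by omega)
      rw [Mdef_mid m L _ (by omega) (by omega)] at hj
      rwa [show (⟨(v:ℕ) - 3 + 3, by omega⟩ : Fin (2*m+3)) = v from Fin.ext (show (v:ℕ) - 3 + 3 = (v:ℕ) by omega)] at hj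
  have hadj : ∀ a b : Fin (2*m+3),
      (((a:ℕ) = 0 ∧ (b:ℕ) = 2) ∨ ((a:ℕ) = 2 ∧ (b:ℕ) = 1) ∨
       ((a:ℕ) = 0 ∧ (b:ℕ) = 3) ∨ ((a:ℕ) = 3 ∧ (b:ℕ) = 1) ∨
       ((a:ℕ) = 0 ∧ (b:ℕ) = 4) ∨
       (4 ≤ (a:ℕ) ∧ (b:ℕ) = (a:ℕ) + 1) ∨
       ((a:ℕ) = 2 * m + 2 ∧ (b:ℕ) = 1)) → f a ≠ f b := by
    intro a b h
    rcases h with ⟨ha, hb⟩ | ⟨ha, hb⟩ | ⟨ha, hb⟩ | ⟨ha, hb⟩ | ⟨ha, hb⟩ | ⟨ha, hb⟩ | ⟨ha, hb⟩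
    · rw [hf0 a ha, hf2 b hb]; exact fun h => hxac h.symm
    · rw [hf2 a ha, hf1 b hb]; exact hxad
    · rw [hf0 a ha, hf3 b hb]; exact fun h => hybc h.symm
    · rw [hf3 a ha, hf1 b hb]; exact hybd
    · rw [hf0 a ha, hfg b (by omega), hb, show (4:ℕ) - 3 = 0 + 1 by omega, ← hg0]
      exact hgstep 0 (by omega)
    · have hb4 : 4 ≤ (b:ℕ) := by omega
      have hlt := b.isLt
      rw [hfg a ha, hfg b hb4, hb, show (a:ℕ) + 1 - 3 = ((a:ℕ) - 3) + 1 by omega]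
      exact hgstep _ (by omega)
    · have h7 := hgstep (2*m - 1) (by omega)
      rw [show 2*m - 1 + 1 = 2*m by omega, hgn] at h7
      rw [hfg a (by omega), hf1 b hb, ha, show 2*m + 2 - 3 = 2*m - 1 by omega]
      exact h7
  refine ⟨f, hmemf, ?_⟩
  intro u v huv
  rw [theta22, SimpleGraph.fromRel_adj] at huv
  obtain ⟨-, h | h⟩ := huv
  · exact hadj u v h
  · exact (hadj v u h).symm
end

section
/- The graph consisting of two even cycles sharing exactly one common vertex is not 2-choosable. -/
/-- Two even cycles `C_{2a}` and `C_{2b}` sharing exactly the vertex `0`: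
the cycle `0-1-⋯-(2a-1)-0` and the cycle `0-(2a)-(2a+1)-⋯-(2a+2b-2)-0`. -/
def twoEvenCycles (a b : ℕ) : SimpleGraph (Fin (2 * a + 2 * b - 1)) :=
  SimpleGraph.fromRel (fun i j =>
    ((i : ℕ) + 1 = (j : ℕ) ∧ 1 ≤ (j : ℕ) ∧ (j : ℕ) ≤ 2 * a - 1) ∨
    ((i : ℕ) = 2 * a - 1 ∧ (j : ℕ) = 0) ∨
    ((i : ℕ) = 0 ∧ (j : ℕ) = 2 * a) ∨
    ((i : ℕ) + 1 = (j : ℕ) ∧ 2 * a + 1 ≤ (j : ℕ) ∧ (j : ℕ) ≤ 2 * a + 2 * b - 2) ∨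
    ((i : ℕ) = 2 * a + 2 * b - 2 ∧ (j : ℕ) = 0))

theorem twoEvenCycles_not_two_choosable (a b : ℕ) (ha : 2 ≤ a) (hb : 2 ≤ b) :
    ¬ Choosable (twoEvenCycles a b) 2 := by
  intro hch
  set L : Fin (2*a+2*b-1) → Finset ℕ := fun i =>
    if (i : ℕ) ≤ 1 then {1,2}
    else if (i : ℕ) ≤ 2*a-2 then {2,3}
    else if (i : ℕ) = 2*a-1 then {1,3}
    else if (i : ℕ) = 2*a then {1,2}
    else if (i : ℕ) ≤ 2*a+2*b-3 then {1,3}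
    else {2,3} with hLdef
  have hcard : ∀ v, (L v).card = 2 := by
    intro v; simp only [hLdef]; split_ifs <;> decide
  obtain ⟨f, hmem, hne⟩ := hch L hcard
  -- adjacency helper
  have adjc : ∀ (i j : ℕ) (hi : i < 2*a+2*b-1) (hj : j < 2*a+2*b-1),
      ((i + 1 = j ∧ 1 ≤ j ∧ j ≤ 2*a-1) ∨ (i = 2*a-1 ∧ j = 0) ∨ (i = 0 ∧ j = 2*a) ∨
       (i+1 = j ∧ 2*a+1 ≤ j ∧ j ≤ 2*a+2*b-2) ∨ (i = 2*a+2*b-2 ∧ j = 0)) → i ≠ j →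
      f ⟨i, hi⟩ ≠ f ⟨j, hj⟩ := by
    intro i j hi hj hrel hij
    apply hne
    rw [twoEvenCycles, SimpleGraph.fromRel_adj]
    exact ⟨by simpa [Fin.ext_iff] using hij, Or.inl hrel⟩
  have h0lt : (0:ℕ) < 2*a+2*b-1 := by omega
  have h0 : f ⟨0, h0lt⟩ = 1 ∨ f ⟨0, h0lt⟩ = 2 := by
    have := hmem ⟨0, h0lt⟩
    simp only [hLdef] at this
    rw [if_pos (by norm_num)] at this
    simpa using this
  rcases h0 with h0 | h0
  · -- first cycle forces contradiction
    have chain : ∀ i, 1 ≤ i → ∀ _ : i ≤ 2*a-2, ∀ hi : i < 2*a+2*b-1,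
        f ⟨i, hi⟩ = if i % 2 = 1 then 2 else 3 := by
      intro i h1
      induction i, h1 using Nat.le_induction with
      | base =>
        intro hle hi
        have hm := hmem ⟨1, hi⟩
        simp only [hLdef] at hm
        rw [if_pos (by norm_num)] at hm
        have hadj := adjc 0 1 h0lt hi (Or.inl ⟨rfl, le_refl 1, by omega⟩) (by omega)
        rw [h0] at hadj
        simp only [Finset.mem_insert, Finset.mem_singleton] at hm
        rw [if_pos (by norm_num)]
        omega
      | succ i hi1 ih =>
        intro hle hlt
        have hprev := ih (by omega) (by omega)
        have hm := hmem ⟨i+1, hlt⟩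
        simp only [hLdef] at hm
        rw [if_neg (by omega), if_pos (by omega)] at hm
        simp only [Finset.mem_insert, Finset.mem_singleton] at hm
        have hadj := adjc i (i+1) (by omega) hlt (Or.inl ⟨rfl, by omega, by omega⟩) (by omega)
        rw [hprev] at hadj
        rcases Nat.mod_two_eq_zero_or_one i with hpar | hpar
        · rw [if_neg (by omega)] at hadj
          rw [if_pos (by omega)]
          omega
        · rw [if_pos (by omega)] at hadj
          rw [if_neg (by omega)]
          omega
    have hlt1 : 2*a-2 < 2*a+2*b-1 := by omega
    have hlt2 : 2*a-1 < 2*a+2*b-1 := by omega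
    have hprev := chain (2*a-2) (by omega) (le_refl _) hlt1
    rw [if_neg (by omega)] at hprev
    have hm := hmem ⟨2*a-1, hlt2⟩
    simp only [hLdef] at hm
    rw [if_neg (by omega), if_neg (by omega), if_pos trivial] at hm
    simp only [Finset.mem_insert, Finset.mem_singleton] at hm
    have hadj1 := adjc (2*a-2) (2*a-1) hlt1 hlt2 (Or.inl ⟨by omega, by omega, by omega⟩) (by omega)
    have hadj2 := adjc (2*a-1) 0 hlt2 h0lt (Or.inr (Or.inl ⟨rfl, rfl⟩)) (by omega)
    rw [hprev] at hadj1
    rw [h0] at hadj2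
    omega
  · -- second cycle forces contradiction
    have chain : ∀ i, 2*a ≤ i → ∀ _ : i ≤ 2*a+2*b-3, ∀ hi : i < 2*a+2*b-1,
        f ⟨i, hi⟩ = if i % 2 = 0 then 1 else 3 := by
      intro i h1
      induction i, h1 using Nat.le_induction with
      | base =>
        intro hle hi
        have hm := hmem ⟨2*a, hi⟩
        simp only [hLdef] at hm
        rw [if_neg (by omega), if_neg (by omega), if_neg (by omega), if_pos trivial] at hm
        simp only [Finset.mem_insert, Finset.mem_singleton] at hm
        have hadj := adjc 0 (2*a) h0lt hi (Or.inr (Or.inr (Or.inl ⟨rfl, rfl⟩))) (by omega)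
        rw [h0] at hadj
        rw [if_pos (by omega)]
        omega
      | succ i hi1 ih =>
        intro hle hlt
        have hprev := ih (by omega) (by omega)
        have hm := hmem ⟨i+1, hlt⟩
        simp only [hLdef] at hm
        rw [if_neg (by omega), if_neg (by omega), if_neg (by omega), if_neg (by omega),
          if_pos (by omega)] at hm
        simp only [Finset.mem_insert, Finset.mem_singleton] at hm
        have hadj := adjc i (i+1) (by omega) hlt
          (Or.inr (Or.inr (Or.inr (Or.inl ⟨rfl, by omega, by omega⟩)))) (by omega)
        rw [hprev] at hadj
        rcases Nat.mod_two_eq_zero_or_one i with hpar | hpar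
        · rw [if_pos (by omega)] at hadj
          rw [if_neg (by omega)]
          omega
        · rw [if_neg (by omega)] at hadj
          rw [if_pos (by omega)]
          omega
    have hlt1 : 2*a+2*b-3 < 2*a+2*b-1 := by omega
    have hlt2 : 2*a+2*b-2 < 2*a+2*b-1 := by omega
    have hprev := chain (2*a+2*b-3) (by omega) (le_refl _) hlt1
    rw [if_neg (by omega)] at hprev
    have hm := hmem ⟨2*a+2*b-2, hlt2⟩
    simp only [hLdef] at hm
    rw [if_neg (by omega), if_neg (by omega), if_neg (by omega), if_neg (by omega),
      if_neg (by omega)] at hm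
    simp only [Finset.mem_insert, Finset.mem_singleton] at hm
    have hadj1 := adjc (2*a+2*b-3) (2*a+2*b-2) hlt1 hlt2
      (Or.inr (Or.inr (Or.inr (Or.inl ⟨by omega, by omega, by omega⟩)))) (by omega)
    have hadj2 := adjc (2*a+2*b-2) 0 hlt2 h0lt (Or.inr (Or.inr (Or.inr (Or.inr ⟨rfl, rfl⟩)))) (by omega)
    rw [hprev] at hadj1
    rw [h0] at hadj2
    omega
end
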